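/- arXiv:1410.8592 — 3 statements merged into one kernel-verified Lean document; each statement's English description precedes it below -/
import Mathlib

section
/- If θ(n) = n + o(n^s) as n → ∞ for some fixed real s with 3/4 ≤ s < 1, then for every h > 0 the number of primes in the interval (n, (1+h)n] tends to infinity as n → ∞. -/
open Filter Asymptotics

private lemma rpow_isLittleO_id (s : ℝ) (hs2 : s < 1) :
    (fun x : ℝ => x ^ s) =o[atTop] fun x => x := by
  have h0 : ∀ᶠ x : ℝ in atTop, x = 0 → x ^ s = 0 := by
    filter_upwards [eventually_gt_atTop (0:ℝ)] with x hx hx0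
    exact absurd hx0 hx.ne'
  rw [isLittleO_iff_tendsto' h0]
  have h := tendsto_rpow_neg_atTop (show 0 < 1 - s by linarith)
  refine h.congr' ?_
  filter_upwards [eventually_gt_atTop (0:ℝ)] with x hx
  rw [neg_sub, Real.rpow_sub hx, Real.rpow_one]

theorem primes_in_interval_tendsto_atTop
    (θ : ℝ → ℝ)
    (hθ : ∀ x : ℝ, θ x =
      ∑ p ∈ (Finset.range (⌊x⌋₊ + 1)).filter Nat.Prime, Real.log p)
    (s : ℝ) (hs1 : 3 / 4 ≤ s) (hs2 : s < 1)
    (hasymp : (fun n : ℕ => θ n - n) =o[atTop] fun n : ℕ => (n : ℝ) ^ s) :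
    ∀ h : ℝ, 0 < h →
      Tendsto (fun n : ℕ =>
          ((Finset.Ioc n ⌊(1 + h) * (n : ℝ)⌋₊).filter Nat.Prime).card)
        atTop atTop := by
  intro h hh
  set c : ℝ := 1 + h with hc_def
  have hc1 : 1 < c := by simp [hc_def]; linarith
  have hc0 : 0 < c := by linarith
  have hs0 : (0:ℝ) ≤ s := by linarith
  have hnM : ∀ n : ℕ, n ≤ ⌊c * (n:ℝ)⌋₊ := by
    intro n
    apply Nat.le_floor
    nlinarith [Nat.cast_nonneg (α := ℝ) n]
  have hMle : ∀ n : ℕ, ((⌊c * (n:ℝ)⌋₊ : ℝ)) ≤ c * n := fun n => Nat.floor_le (by positivity)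
  have hMtop : Tendsto (fun n : ℕ => ⌊c * (n:ℝ)⌋₊) atTop atTop :=
    tendsto_atTop_mono hnM tendsto_id
  -- theta difference identity
  have key : ∀ n : ℕ, θ (c * n) - θ n =
      ∑ p ∈ (Finset.Ioc n ⌊c * (n:ℝ)⌋₊).filter Nat.Prime, Real.log p := by
    intro n
    rw [hθ, hθ, Nat.floor_natCast]
    have hsub : Finset.range (n+1) ∪ Finset.Ioc n ⌊c * (n:ℝ)⌋₊ =
        Finset.range (⌊c * (n:ℝ)⌋₊ + 1) := by
      rw [Finset.range_eq_Ico, ← Finset.Ico_add_one_add_one_eq_Ioc,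
        Finset.Ico_union_Ico_eq_Ico (Nat.zero_le _) (Nat.add_le_add_right (hnM n) 1), Finset.range_eq_Ico]
    have hdisj : Disjoint (Finset.range (n+1)) (Finset.Ioc n ⌊c * (n:ℝ)⌋₊) := by
      rw [Finset.disjoint_left]
      intro a ha ha2
      rw [Finset.mem_range] at ha
      rw [Finset.mem_Ioc] at ha2
      omega
    rw [← hsub, Finset.filter_union,
      Finset.sum_union (Finset.disjoint_filter_filter hdisj)]
    ring
  -- littleO facts
  have hlittle : (fun n : ℕ => (n:ℝ) ^ s) =o[atTop] fun n : ℕ => (n:ℝ) :=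
    (rpow_isLittleO_id s hs2).comp_tendsto tendsto_natCast_atTop_atTop
  have hbigO : (fun n : ℕ => ((⌊c * (n:ℝ)⌋₊ : ℝ)) ^ s) =O[atTop]
      fun n : ℕ => (n:ℝ) ^ s := by
    apply IsBigO.of_bound (c ^ s)
    filter_upwards with n
    rw [Real.norm_eq_abs, Real.norm_eq_abs,
      abs_of_nonneg (Real.rpow_nonneg (Nat.cast_nonneg _) _),
      abs_of_nonneg (Real.rpow_nonneg (Nat.cast_nonneg _) _),
      ← Real.mul_rpow hc0.le (Nat.cast_nonneg _)]
    exact Real.rpow_le_rpow (Nat.cast_nonneg _) (hMle n) hs0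
  have hE : (fun n : ℕ => θ (⌊c * (n:ℝ)⌋₊ : ℕ) - (⌊c * (n:ℝ)⌋₊ : ℕ)) =o[atTop]
      fun n : ℕ => (n:ℝ) :=
    ((hasymp.comp_tendsto hMtop).trans_isBigO hbigO).trans hlittle
  have he : (fun n : ℕ => θ n - n) =o[atTop] fun n : ℕ => (n:ℝ) := hasymp.trans hlittle
  have hF := IsLittleO.def (hE.sub he) (show (0:ℝ) < h/4 by linarith)
  rw [tendsto_atTop]
  intro b
  have hbp : (0:ℝ) < (b:ℝ) + 1 := by positivity
  set ε : ℝ := h / (4 * c * ((b:ℝ) + 1)) with hε_def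
  have hε : 0 < ε := by positivity
  have hctop : Tendsto (fun n : ℕ => c * (n:ℝ)) atTop atTop :=
    (tendsto_natCast_atTop_atTop).const_mul_atTop hc0
  have hlog := IsLittleO.def (Real.isLittleO_log_id_atTop.comp_tendsto hctop) hε
  have hN := tendsto_natCast_atTop_atTop.eventually_ge_atTop (4/h + 1)
  filter_upwards [hF, hlog, hN] with n hFn hlogn hn1
  simp only [Function.comp, Real.norm_eq_abs, id_eq] at hFn hlogn
  have hn0 : (1:ℝ) ≤ (n:ℝ) := by
    have : (0:ℝ) < 4/h := by positivity
    linarith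
  have hhn : 4 ≤ h * n := by
    have h1 : h * (4/h + 1) ≤ h * n := by
      apply mul_le_mul_of_nonneg_left hn1 hh.le
    rw [mul_add, mul_div_cancel₀ _ hh.ne'] at h1
    linarith
  set m : ℕ := ⌊c * (n:ℝ)⌋₊ with hm_def
  set k : ℕ := ((Finset.Ioc n m).filter Nat.Prime).card with hk_def
  -- Bound (A)
  have hA : θ (c * n) - θ n ≤ (k:ℝ) * Real.log (c * n) := by
    rw [key n]
    have := Finset.sum_le_card_nsmul ((Finset.Ioc n m).filter Nat.Prime)
      (fun p => Real.log p) (Real.log (c * n)) ?_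
    · simpa [nsmul_eq_mul] using this
    · intro p hp
      simp only [Finset.mem_filter, Finset.mem_Ioc] at hp
      have hp1 : (1:ℝ) ≤ (p:ℝ) := by exact_mod_cast hp.2.one_lt.le
      have hpm : (p:ℝ) ≤ c * n := le_trans (by exact_mod_cast hp.1.2) (hMle n)
      exact Real.log_le_log (by linarith) hpm
  -- Bound (B)
  have hθm : θ (c * n) = θ (m : ℝ) := by
    rw [hθ, hθ, Nat.floor_natCast]
  have hmlb : c * n - 1 < (m:ℝ) := Nat.sub_one_lt_floor _
  have habs := abs_le.mp hFn
  have hB : (h/2) * n ≤ θ (c * n) - θ n := by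
    have hexp : θ (c * n) - θ n =
        ((m:ℝ) - n) + ((θ (m:ℝ) - m) - (θ (n:ℝ) - n)) := by
      rw [hθm]; ring
    rw [hexp]
    have h2 : |(n:ℝ)| = n := abs_of_nonneg (Nat.cast_nonneg n)
    rw [h2] at habs
    have : (m:ℝ) - n ≥ h * n - 1 := by
      have : c * n = n + h * n := by rw [hc_def]; ring
      nlinarith
    nlinarith [habs.1]
  -- conclude
  have hlogle : Real.log (c * n) ≤ ε * (c * n) := by
    have h2 : |c * (n:ℝ)| = c * n := abs_of_nonneg (by positivity)
    rw [h2] at hlogn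
    exact (le_abs_self _).trans hlogn
  have hk0 : (0:ℝ) ≤ (k:ℝ) := Nat.cast_nonneg _
  have h1 : (h/2) * n ≤ (k:ℝ) * (ε * (c * n)) :=
    (hB.trans hA).trans (mul_le_mul_of_nonneg_left hlogle hk0)
  have hεc : ε * c = h / (4 * ((b:ℝ) + 1)) := by
    rw [hε_def]; field_simp
  have h2 : (h/2) * n ≤ (k:ℝ) * (h / (4 * ((b:ℝ)+1))) * n := by
    calc (h/2) * n ≤ (k:ℝ) * (ε * (c * n)) := h1
      _ = (k:ℝ) * (ε * c) * n := by ring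
      _ = (k:ℝ) * (h / (4 * ((b:ℝ)+1))) * n := by rw [hεc]
  have h3 : h/2 ≤ (k:ℝ) * (h / (4 * ((b:ℝ)+1))) :=
    le_of_mul_le_mul_right (by linarith [h2]) (by linarith : (0:ℝ) < n)
  have h4 : (b:ℝ) ≤ (k:ℝ) := by
    rw [← mul_div_assoc, le_div_iff₀ (by positivity)] at h3
    have h5 : 2 * ((b:ℝ)+1) ≤ (k:ℝ) := by
      refine le_of_mul_le_mul_right ?_ hh
      ring_nf
      ring_nf at h3
      linarith
    linarith
  exact_mod_cast h4
end

section
/- The sum ∑_{p ≤ n, p prime} 1/p − log(log n) converges to a finite limit (the Mertens constant) as n → ∞. -/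
open Filter Finset

noncomputable def mf (k : ℕ) : ℝ := if k.Prime then Real.log k / k else 0

noncomputable def mT (n : ℕ) : ℝ := ∑ k ∈ Finset.range (n+1), mf k

lemma mT_eq (n : ℕ) :
    mT n = ∑ p ∈ (Finset.range (n+1)).filter Nat.Prime, Real.log p / p := by
  rw [mT, Finset.sum_filter]; rfl

lemma cheb (n : ℕ) :
    ∑ p ∈ (Finset.range (n+1)).filter Nat.Prime, Real.log p ≤ n * Real.log 4 := by
  have h1 : ∑ p ∈ (Finset.range (n+1)).filter Nat.Prime, Real.log p
      = Real.log (primorial n) := by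
    rw [primorial, Nat.cast_prod, Real.log_prod]
    intro p hp
    have := (Finset.mem_filter.mp hp).2.pos
    positivity
  rw [h1]
  calc Real.log (primorial n) ≤ Real.log ((4:ℕ) ^ n) := by
        apply Real.log_le_log (by exact_mod_cast (primorial_pos n))
        exact_mod_cast primorial_le_4_pow n
    _ = n * Real.log 4 := by
        rw [Real.log_pow]; norm_num

-- geometric bound
lemma geom_bound {r : ℝ} (h0 : 0 < r) (h2 : r ≤ 1/2) (m : ℕ) :
    ∑ i ∈ Finset.Ico 1 m, r ^ i ≤ r + 2 * r ^ 2 := by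
  have hr1 : r < 1 := by linarith
  have h := hasSum_geometric_of_lt_one h0.le hr1
  have hts : ∑ i ∈ Finset.range (m-1), r ^ i ≤ (1 - r)⁻¹ := by
    have := Summable.sum_le_tsum (Finset.range (m-1)) (fun i _ => by positivity) h.summable
    rwa [h.tsum_eq] at this
  have heq : ∑ i ∈ Finset.Ico 1 m, r ^ i = r * ∑ i ∈ Finset.range (m-1), r ^ i := by
    rw [Finset.sum_Ico_eq_sum_range, Finset.mul_sum]
    exact Finset.sum_congr rfl (fun i _ => by ring)
  rw [heq]
  have h3 : r * ∑ i ∈ Finset.range (m-1), r ^ i ≤ r * (1 - r)⁻¹ :=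
    mul_le_mul_of_nonneg_left hts h0.le
  refine h3.trans ?_
  rw [mul_inv_le_iff₀ (by linarith)]
  nlinarith

lemma legendre {p n : ℕ} (hp : p.Prime) :
    (n.factorial).factorization p = ∑ i ∈ Finset.Ico 1 (n+1), n / p ^ i := by
  haveI : Fact p.Prime := ⟨hp⟩
  rw [Nat.factorization_def _ hp]
  exact padicValNat_factorial (Nat.lt_succ_of_le (Nat.log_le_self p n))

lemma fact_lower {p n : ℕ} (hp : p.Prime) (hn : 1 ≤ n) :
    n / p ≤ (n.factorial).factorization p := by
  rw [legendre hp]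
  have h1 : (1:ℕ) ∈ Finset.Ico 1 (n+1) := by simp; omega
  calc n / p = n / p ^ 1 := by rw [pow_one]
    _ ≤ _ := Finset.single_le_sum (f := fun i => n / p ^ i) (fun i _ => Nat.zero_le _) h1

lemma fact_upper {p n : ℕ} (hp : p.Prime) :
    ((n.factorial).factorization p : ℝ) ≤ n / p + 2 * n / p ^ 2 := by
  have hp0 : (0:ℝ) < p := by exact_mod_cast hp.pos
  have hp2 : (2:ℝ) ≤ p := by exact_mod_cast hp.two_le
  rw [legendre hp]
  push_cast
  have h1 : ∀ i ∈ Finset.Ico 1 (n+1), ((n / p ^ i : ℕ) : ℝ) ≤ n * (1/p) ^ i := by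
    intro i _
    calc ((n / p ^ i : ℕ) : ℝ) ≤ (n : ℝ) / p ^ i := by
          have := Nat.cast_div_le (α := ℝ) (m := n) (n := p ^ i)
          push_cast at this; exact this
      _ = n * (1/p) ^ i := by rw [div_pow, one_pow]; ring
  calc (∑ i ∈ Finset.Ico 1 (n+1), ((n / p ^ i : ℕ) : ℝ))
      ≤ ∑ i ∈ Finset.Ico 1 (n+1), (n : ℝ) * (1/p) ^ i := Finset.sum_le_sum h1
    _ = n * ∑ i ∈ Finset.Ico 1 (n+1), (1/p : ℝ) ^ i := by rw [Finset.mul_sum]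
    _ ≤ n * (1/p + 2 * (1/p)^2) := by
        apply mul_le_mul_of_nonneg_left _ (Nat.cast_nonneg n)
        apply geom_bound (by positivity)
        rw [div_le_div_iff₀ hp0 (by norm_num)]; linarith
    _ = n / p + 2 * n / p ^ 2 := by field_simp

lemma logfact_eq (n : ℕ) :
    Real.log (n.factorial) =
      ∑ p ∈ (Finset.range (n+1)).filter Nat.Prime,
        ((n.factorial).factorization p : ℝ) * Real.log p := by
  conv_lhs => rw [← Nat.factorization_prod_pow_eq_self n.factorial_ne_zero]
  rw [Nat.prod_factorization_eq_prod_primeFactors, Nat.cast_prod, Real.log_prod]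
  · rw [Finset.sum_subset]
    · exact Finset.sum_congr rfl (fun p hp => by
        rw [Nat.cast_pow, Real.log_pow])
    · intro p hp
      simp only [Nat.mem_primeFactors] at hp
      simp only [Finset.mem_filter, Finset.mem_range]
      exact ⟨Nat.lt_succ_of_le ((Nat.Prime.dvd_factorial hp.1).mp hp.2.1),
        hp.1⟩
    · intro p _ hp
      rw [← Nat.support_factorization, Finsupp.notMem_support_iff] at hp
      rw [hp]; simp
  · intro p hp
    simp only [Nat.mem_primeFactors] at hp
    have := hp.1.pos
    positivity

lemma logfact_upper (n : ℕ) : Real.log (n.factorial) ≤ n * Real.log n := by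
  calc Real.log (n.factorial) ≤ Real.log ((n:ℝ) ^ n) := by
        apply Real.log_le_log (by exact_mod_cast n.factorial_pos)
        exact_mod_cast Nat.factorial_le_pow n
    _ = n * Real.log n := Real.log_pow n n

lemma logfact_lower (n : ℕ) : (n:ℝ) * Real.log n - n ≤ Real.log (n.factorial) := by
  have key : (n:ℝ) ^ n / n.factorial ≤ Real.exp n := by
    calc (n:ℝ) ^ n / n.factorial ≤ ∑ i ∈ Finset.range (n+1), (n:ℝ) ^ i / i.factorial :=
          Finset.single_le_sum (f := fun i => (n:ℝ) ^ i / i.factorial)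
            (fun i _ => by positivity) (Finset.self_mem_range_succ n)
      _ ≤ Real.exp n := Real.sum_le_exp_of_nonneg (Nat.cast_nonneg n) (n+1)
  rcases Nat.eq_zero_or_pos n with h | h
  · simp [h]
  have hn0 : (0:ℝ) < n := by exact_mod_cast h
  have hf0 : (0:ℝ) < n.factorial := by exact_mod_cast n.factorial_pos
  have h2 : (n:ℝ) ^ n ≤ n.factorial * Real.exp n := by
    rw [div_le_iff₀ hf0] at key; linarith [key]
  have h3 := Real.log_le_log (by positivity) h2
  rw [Real.log_mul hf0.ne' (Real.exp_ne_zero n), Real.log_pow, Real.log_exp] at h3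
  linarith

lemma mertens_first_upper {n : ℕ} (hn : 1 ≤ n) : mT n ≤ Real.log n + Real.log 4 := by
  have hn0 : (0:ℝ) < n := by exact_mod_cast hn
  have key : (n:ℝ) * mT n ≤ n * (Real.log n + Real.log 4) := by
    rw [mT_eq, Finset.mul_sum]
    calc ∑ p ∈ (Finset.range (n+1)).filter Nat.Prime, (n:ℝ) * (Real.log p / p)
        ≤ ∑ p ∈ (Finset.range (n+1)).filter Nat.Prime,
            (((n / p : ℕ) : ℝ) + 1) * Real.log p := by
          apply Finset.sum_le_sum
          intro p hp
          have hp' := (Finset.mem_filter.mp hp).2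
          have hp0 : (0:ℝ) < p := by exact_mod_cast hp'.pos
          have hlp : 0 ≤ Real.log p := Real.log_nonneg (by exact_mod_cast hp'.one_lt.le)
          have hdiv : (n:ℝ) / p ≤ ((n / p : ℕ) : ℝ) + 1 := by
            have h1 : n < (n / p + 1) * p := by
              have := Nat.lt_div_mul_add (a := n) hp'.pos
              calc n < n / p * p + p := this
                _ = (n / p + 1) * p := by ring
            have h2 : (n:ℝ) < (((n / p : ℕ) : ℝ) + 1) * p := by exact_mod_cast h1
            rw [div_le_iff₀ hp0]; linarith
          calc (n:ℝ) * (Real.log p / p) = ((n:ℝ)/p) * Real.log p := by ring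
            _ ≤ (((n / p : ℕ) : ℝ) + 1) * Real.log p := by
                exact mul_le_mul_of_nonneg_right hdiv hlp
      _ = ∑ p ∈ (Finset.range (n+1)).filter Nat.Prime, ((n / p : ℕ) : ℝ) * Real.log p
          + ∑ p ∈ (Finset.range (n+1)).filter Nat.Prime, Real.log p := by
          rw [← Finset.sum_add_distrib]
          exact Finset.sum_congr rfl (fun p _ => by ring)
      _ ≤ Real.log (n.factorial) + n * Real.log 4 := by
          apply add_le_add _ (cheb n)
          rw [logfact_eq]
          apply Finset.sum_le_sum
          intro p hp
          have hp' := (Finset.mem_filter.mp hp).2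
          have hlp : 0 ≤ Real.log p := Real.log_nonneg (by exact_mod_cast hp'.one_lt.le)
          apply mul_le_mul_of_nonneg_right _ hlp
          exact_mod_cast fact_lower hp' hn
      _ ≤ n * (Real.log n + Real.log 4) := by
          have := logfact_upper n; ring_nf; ring_nf at this ⊢; nlinarith [this]
  exact le_of_mul_le_mul_left (by linarith) hn0

noncomputable def mw (k : ℕ) : ℝ := 2 * Real.log k / (k:ℝ) ^ 2

lemma mw_nonneg (k : ℕ) : 0 ≤ mw k := by
  rcases Nat.eq_zero_or_pos k with h | h
  · simp [mw, h]
  · have h1 : (1:ℝ) ≤ k := by exact_mod_cast h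
    have h2 := Real.log_nonneg h1
    exact div_nonneg (by linarith) (sq_nonneg _)

lemma mw_summable : Summable mw := by
  have hs : Summable (fun k : ℕ => 4 * (1 / (k:ℝ) ^ (3/2 : ℝ))) :=
    (Real.summable_one_div_nat_rpow.mpr (by norm_num)).mul_left 4
  apply Summable.of_nonneg_of_le mw_nonneg _ hs
  intro k
  rcases Nat.lt_or_ge k 2 with h | h
  · have h0 : mw k = 0 := by interval_cases k <;> simp [mw]
    rw [h0]
    have h1 : (0:ℝ) ≤ (k:ℝ) ^ (3/2:ℝ) := Real.rpow_nonneg (Nat.cast_nonneg k) _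
    positivity
  · have hk1 : (1:ℝ) ≤ k := by exact_mod_cast Nat.one_le_of_lt h
    have hk0 : (0:ℝ) < k := by linarith
    have hlog : Real.log k ≤ 2 * Real.sqrt k := by
      have h1 : Real.log (Real.sqrt k) ≤ Real.sqrt k - 1 :=
        Real.log_le_sub_one_of_pos (Real.sqrt_pos.mpr hk0)
      have h2 : Real.log (Real.sqrt k) = Real.log k / 2 := Real.log_sqrt hk0.le
      linarith
    have hsq : Real.sqrt k * (k:ℝ) ^ (3/2:ℝ) = (k:ℝ) ^ 2 := by
      rw [Real.sqrt_eq_rpow, ← Real.rpow_add hk0, ← Real.rpow_natCast (k:ℝ) 2]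
      norm_num
    have hsqpos : 0 < Real.sqrt k := Real.sqrt_pos.mpr hk0
    have hrp : (0:ℝ) < (k:ℝ) ^ (3/2:ℝ) := Real.rpow_pos_of_pos hk0 _
    rw [mw, div_le_iff₀ (by positivity)]
    have he : 4 * (1 / (k:ℝ) ^ (3/2:ℝ)) * (k:ℝ) ^ 2 = 4 * (k:ℝ)^2 / (k:ℝ)^(3/2:ℝ) := by
      ring
    rw [he, le_div_iff₀ hrp]
    nlinarith [mul_nonneg (by linarith : (0:ℝ) ≤ 2 * Real.sqrt k - Real.log k) hrp.le, hsq]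

noncomputable def mC2 : ℝ := ∑' k, mw k

lemma mC2_nonneg : 0 ≤ mC2 := tsum_nonneg mw_nonneg

lemma sum_mw_le (n : ℕ) :
    ∑ p ∈ (Finset.range (n+1)).filter Nat.Prime, mw p ≤ mC2 := by
  calc ∑ p ∈ (Finset.range (n+1)).filter Nat.Prime, mw p ≤ mC2 :=
    Summable.sum_le_tsum _ (fun i _ => mw_nonneg i) mw_summable

lemma mertens_first_lower {n : ℕ} (hn : 1 ≤ n) : Real.log n - 1 - mC2 ≤ mT n := by
  have hn0 : (0:ℝ) < n := by exact_mod_cast hn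
  have key : (n:ℝ) * (Real.log n - 1 - mC2) ≤ n * mT n := by
    have h1 : (n:ℝ) * Real.log n - n ≤ Real.log (n.factorial) := logfact_lower n
    have h2 : Real.log (n.factorial) ≤ n * mT n + n * mC2 := by
      rw [logfact_eq, mT_eq, Finset.mul_sum]
      calc ∑ p ∈ (Finset.range (n+1)).filter Nat.Prime,
            ((n.factorial).factorization p : ℝ) * Real.log p
          ≤ ∑ p ∈ (Finset.range (n+1)).filter Nat.Prime,
              ((n:ℝ) * (Real.log p / p) + n * mw p) := by
            apply Finset.sum_le_sum
            intro p hp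
            have hp' := (Finset.mem_filter.mp hp).2
            have hp0 : (0:ℝ) < p := by exact_mod_cast hp'.pos
            have hlp : 0 ≤ Real.log p := Real.log_nonneg (by exact_mod_cast hp'.one_lt.le)
            have := fact_upper (n := n) hp'
            calc ((n.factorial).factorization p : ℝ) * Real.log p
                ≤ ((n:ℝ) / p + 2 * n / p ^ 2) * Real.log p :=
                  mul_le_mul_of_nonneg_right this hlp
              _ = (n:ℝ) * (Real.log p / p) + n * (2 * Real.log p / p ^ 2) := by
                  field_simp
              _ = (n:ℝ) * (Real.log p / p) + n * mw p := rfl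
        _ = (∑ p ∈ (Finset.range (n+1)).filter Nat.Prime, (n:ℝ) * (Real.log p / p))
            + ∑ p ∈ (Finset.range (n+1)).filter Nat.Prime, (n:ℝ) * mw p := by
            rw [Finset.sum_add_distrib]
        _ ≤ (∑ p ∈ (Finset.range (n+1)).filter Nat.Prime, (n:ℝ) * (Real.log p / p))
            + n * mC2 := by
            apply add_le_add_right
            rw [← Finset.mul_sum]
            exact mul_le_mul_of_nonneg_left (sum_mw_le n) hn0.le
    linarith
  exact le_of_mul_le_mul_left key hn0

noncomputable def mC : ℝ := max (Real.log 4) (1 + mC2)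

lemma mE_bound {n : ℕ} (hn : 1 ≤ n) : |mT n - Real.log n| ≤ mC := by
  rw [abs_le]
  constructor
  · have := mertens_first_lower hn
    have h2 : 1 + mC2 ≤ mC := le_max_right _ _
    linarith
  · have := mertens_first_upper hn
    have h2 : Real.log 4 ≤ mC := le_max_left _ _
    linarith

noncomputable def mg (k : ℕ) : ℝ := if k.Prime then 1 / (k:ℝ) else 0

noncomputable def mS (n : ℕ) : ℝ := ∑ k ∈ Finset.range (n+1), mg k

lemma mS_eq (n : ℕ) :
    mS n = ∑ p ∈ (Finset.range (n+1)).filter Nat.Prime, 1 / (p:ℝ) := by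
  rw [mS, Finset.sum_filter]; rfl

lemma mg_eq {k : ℕ} (hk : 2 ≤ k) : mg k = mf k / Real.log k := by
  have hlog : Real.log k ≠ 0 := by
    have : (1:ℝ) < k := by exact_mod_cast hk
    exact ne_of_gt (Real.log_pos this)
  have hk0 : (k:ℝ) ≠ 0 := by positivity
  rw [mg, mf]
  split
  · field_simp
  · simp

lemma abel_identity {n : ℕ} (hn : 2 ≤ n) :
    mS n = mT n / Real.log n +
      ∑ k ∈ Finset.Ico 2 n, mT k * (1 / Real.log k - 1 / Real.log (k+1)) := by
  induction n, hn using Nat.le_induction with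
  | base =>
    have h0 : mS 2 = mg 2 := by
      rw [mS]
      rw [Finset.sum_range_succ, Finset.sum_range_succ, Finset.sum_range_one]
      simp [mg, Nat.not_prime_zero, Nat.not_prime_one]
    have h1 : mT 2 = mf 2 := by
      rw [mT]
      rw [Finset.sum_range_succ, Finset.sum_range_succ, Finset.sum_range_one]
      simp [mf, Nat.not_prime_zero, Nat.not_prime_one]
    simp only [Finset.Ico_self, Finset.sum_empty, add_zero]
    rw [h0, h1, mg_eq le_rfl]
  | succ n hn ih =>
    have hS : mS (n+1) = mS n + mg (n+1) := Finset.sum_range_succ mg (n+1)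
    have hT : mT (n+1) = mT n + mf (n+1) := Finset.sum_range_succ mf (n+1)
    rw [hS, ih, Finset.sum_Ico_succ_top hn, hT,
      mg_eq (by omega : 2 ≤ n + 1)]
    push_cast
    ring

noncomputable def md (k : ℕ) : ℝ := 1 / Real.log k - 1 / Real.log (k+1)

noncomputable def mu (k : ℕ) : ℝ :=
  mT k * md k - (Real.log (Real.log (k+1)) - Real.log (Real.log k))

noncomputable def mv (k : ℕ) : ℝ := if 2 ≤ k then mu k else 0

lemma log_pos_of_two_le {k : ℕ} (hk : 2 ≤ k) : 0 < Real.log k :=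
  Real.log_pos (by exact_mod_cast hk)

lemma md_nonneg {k : ℕ} (hk : 2 ≤ k) : 0 ≤ md k := by
  have ha : 0 < Real.log k := log_pos_of_two_le hk
  have hb : Real.log k ≤ Real.log (k+1) := by
    apply Real.log_le_log (by positivity)
    push_cast; linarith
  rw [md, sub_nonneg]
  apply one_div_le_one_div_of_le ha hb

lemma mu_bound {k : ℕ} (hk : 2 ≤ k) : |mu k| ≤ (mC + 1) * md k := by
  set a := Real.log k with hadef
  set b := Real.log (k+1) with hbdef
  have hk1 : (1:ℝ) < k := by exact_mod_cast hk
  have ha : 0 < a := log_pos_of_two_le hk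
  have hab : a ≤ b := by
    apply Real.log_le_log (by positivity)
    push_cast; linarith
  have hb : 0 < b := lt_of_lt_of_le ha hab
  have hba1 : b - a ≤ 1 := by
    have h1 : b - a = Real.log (((k:ℝ)+1)/(k:ℝ)) := by
      rw [Real.log_div (by positivity) (by positivity)]
    have h2 : Real.log (((k:ℝ)+1)/(k:ℝ)) ≤ ((k:ℝ)+1)/(k:ℝ) - 1 :=
      Real.log_le_sub_one_of_pos (by positivity)
    have h3 : ((k:ℝ)+1)/(k:ℝ) - 1 ≤ 1 := by
      rw [div_sub_one (by positivity : (k:ℝ) ≠ 0), div_le_one (by positivity : (0:ℝ) < k)]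
      linarith
    rw [h1]
    linarith
  -- log b - log a bounds
  have hA : Real.log b - Real.log a ≤ (b - a) / a := by
    have := Real.log_le_sub_one_of_pos (x := b / a) (by positivity)
    rw [Real.log_div hb.ne' ha.ne'] at this
    have h2 : b / a - 1 = (b - a) / a := by field_simp
    linarith
  have hB : (b - a) / b ≤ Real.log b - Real.log a := by
    have := Real.log_le_sub_one_of_pos (x := a / b) (by positivity)
    rw [Real.log_div ha.ne' hb.ne'] at this
    have h2 : a / b - 1 = -((b - a) / b) := by field_simp; ring
    linarith
  have hmd : md k = 1/a - 1/b := rfl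
  have hTd : mT k * md k = (mT k - a) * md k + (b - a) / b := by
    have : a * md k = (b - a) / b := by
      rw [hmd]; field_simp
    rw [hmd] at this ⊢
    nlinarith [this]
  have hE := mE_bound (n := k) (by omega)
  rw [← hadef] at hE
  have hmd0 : 0 ≤ md k := md_nonneg hk
  have habs1 : |(mT k - a) * md k| ≤ mC * md k := by
    rw [abs_mul, abs_of_nonneg hmd0]
    exact mul_le_mul_of_nonneg_right hE hmd0
  have hdd : |(b - a)/b - (Real.log b - Real.log a)| ≤ md k := by
    rw [abs_le]
    constructor
    · have h1 : (b - a)/a - (b - a)/b = (b - a) * md k := by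
        rw [hmd]; field_simp
      have h2 : (b - a) * md k ≤ 1 * md k :=
        mul_le_mul_of_nonneg_right hba1 hmd0
      linarith
    · linarith
  have hmu : mu k = (mT k - a) * md k + ((b - a)/b - (Real.log b - Real.log a)) := by
    rw [mu, hTd, ← hadef, ← hbdef]; ring
  calc |mu k| ≤ |(mT k - a) * md k| + |(b - a)/b - (Real.log b - Real.log a)| := by
        rw [hmu]; exact abs_add_le _ _
    _ ≤ mC * md k + md k := add_le_add habs1 hdd
    _ = (mC + 1) * md k := by ring

lemma tele (f : ℕ → ℝ) {n : ℕ} (hn : 2 ≤ n) :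
    ∑ k ∈ Finset.Ico 2 n, (f (k+1) - f k) = f n - f 2 := by
  induction n, hn using Nat.le_induction with
  | base => simp
  | succ n hn ih => rw [Finset.sum_Ico_succ_top hn, ih]; ring

lemma md_eq (k : ℕ) :
    md k = (fun j : ℕ => -(1 / Real.log (j:ℝ))) (k+1) - (fun j : ℕ => -(1 / Real.log (j:ℝ))) k := by
  simp only [md]; push_cast; ring

lemma sum_md {n : ℕ} (hn : 2 ≤ n) :
    ∑ k ∈ Finset.Ico 2 n, md k = 1 / Real.log 2 - 1 / Real.log n := by
  have := tele (fun j : ℕ => -(1 / Real.log (j:ℝ))) hn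
  calc ∑ k ∈ Finset.Ico 2 n, md k
      = ∑ k ∈ Finset.Ico 2 n,
        ((fun j : ℕ => -(1 / Real.log (j:ℝ))) (k+1) - (fun j : ℕ => -(1 / Real.log (j:ℝ))) k) :=
        Finset.sum_congr rfl (fun k _ => md_eq k)
    _ = 1 / Real.log 2 - 1 / Real.log n := by rw [this]; push_cast; ring

noncomputable def mdv (k : ℕ) : ℝ := if 2 ≤ k then md k else 0

lemma mdv_summable : Summable mdv := by
  apply summable_of_sum_range_le (c := 1 / Real.log 2)
  · intro k
    rw [mdv]
    split
    · exact md_nonneg (by assumption)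
    · rfl
  · intro n
    rcases Nat.lt_or_ge n 2 with h | h
    · have h0 : ∑ i ∈ Finset.range n, mdv i = 0 := by
        apply Finset.sum_eq_zero
        intro i hi
        simp only [Finset.mem_range] at hi
        rw [mdv, if_neg (by omega)]
      rw [h0]
      positivity
    · have h1 : ∑ i ∈ Finset.range n, mdv i = ∑ k ∈ Finset.Ico 2 n, md k := by
        rw [Finset.range_eq_Ico, ← Finset.sum_Ico_consecutive mdv (by omega : 0 ≤ 2) h]
        have h2 : ∑ i ∈ Finset.Ico 0 2, mdv i = 0 := by
          rw [show Finset.Ico 0 2 = {0, 1} by rfl]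
          simp [mdv]
        rw [h2, zero_add]
        exact Finset.sum_congr rfl (fun k hk => by
          rw [mdv, if_pos (Finset.mem_Ico.mp hk).1])
      rw [h1, sum_md h]
      have : 0 ≤ 1 / Real.log n := by
        have := log_pos_of_two_le h
        positivity
      linarith

lemma mv_summable : Summable mv := by
  have hC : 0 ≤ mC + 1 := by
    have : (0:ℝ) ≤ Real.log 4 := Real.log_nonneg (by norm_num)
    have := le_max_left (Real.log 4) (1 + mC2)
    have h2 : Real.log 4 ≤ mC := le_max_left _ _
    simp only [mC]
    have := le_trans this (le_refl _)
    nlinarith [le_max_left (Real.log 4) (1 + mC2)]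
  apply Summable.of_abs
  refine Summable.of_nonneg_of_le (g := fun k => |mv k|) (f := fun k => (mC + 1) * mdv k)
    (fun k => abs_nonneg _) (fun k => ?_) (mdv_summable.mul_left _)
  simp only [mv, mdv]
  split
  · exact mu_bound (by assumption)
  · simp

lemma sum_mv {n : ℕ} (hn : 2 ≤ n) :
    ∑ k ∈ Finset.range n, mv k = ∑ k ∈ Finset.Ico 2 n, mu k := by
  rw [Finset.range_eq_Ico, ← Finset.sum_Ico_consecutive mv (by omega : 0 ≤ 2) hn]
  have h2 : ∑ i ∈ Finset.Ico 0 2, mv i = 0 := by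
    rw [show Finset.Ico 0 2 = {0, 1} by rfl]
    simp [mv]
  rw [h2, zero_add]
  exact Finset.sum_congr rfl (fun k hk => by
    rw [mv, if_pos (Finset.mem_Ico.mp hk).1])

lemma sum_loglog {n : ℕ} (hn : 2 ≤ n) :
    ∑ k ∈ Finset.Ico 2 n, (Real.log (Real.log (k+1)) - Real.log (Real.log k))
      = Real.log (Real.log n) - Real.log (Real.log 2) := by
  have := tele (fun j : ℕ => Real.log (Real.log (j:ℝ))) hn
  calc ∑ k ∈ Finset.Ico 2 n, (Real.log (Real.log (k+1)) - Real.log (Real.log k))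
      = ∑ k ∈ Finset.Ico 2 n,
          ((fun j : ℕ => Real.log (Real.log (j:ℝ))) (k+1)
            - (fun j : ℕ => Real.log (Real.log (j:ℝ))) k) := by
        apply Finset.sum_congr rfl
        intro k _
        simp only []
        push_cast
        ring
    _ = Real.log (Real.log n) - Real.log (Real.log 2) := by rw [this]; push_cast; ring

lemma mT_div_log_tendsto : Tendsto (fun n : ℕ => mT n / Real.log n) atTop (nhds 1) := by
  have hlogtop : Tendsto (fun n : ℕ => Real.log n) atTop atTop :=
    Real.tendsto_log_atTop.comp tendsto_natCast_atTop_atTop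
  have hinv : Tendsto (fun n : ℕ => (Real.log n)⁻¹) atTop (nhds 0) :=
    hlogtop.inv_tendsto_atTop
  have he : Tendsto (fun n : ℕ => (mT n - Real.log n) / Real.log n) atTop (nhds 0) := by
    apply squeeze_zero_norm' (a := fun n : ℕ => mC * (Real.log n)⁻¹)
    · filter_upwards [eventually_ge_atTop 2] with n hn
      have hl := log_pos_of_two_le hn
      rw [Real.norm_eq_abs, abs_div, abs_of_pos hl, div_eq_mul_inv]
      exact mul_le_mul_of_nonneg_right (mE_bound (by omega)) (by positivity)
    · have := hinv.const_mul mC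
      simpa using this
  have h1 : Tendsto (fun n : ℕ => 1 + (mT n - Real.log n) / Real.log n) atTop
      (nhds (1 + 0)) := tendsto_const_nhds.add he
  rw [add_zero] at h1
  apply h1.congr'
  filter_upwards [eventually_ge_atTop 2] with n hn
  have hl := (log_pos_of_two_le hn).ne'
  field_simp
  ring

theorem mertens_second_theorem :
    ∃ A : ℝ, Tendsto (fun n : ℕ =>
        (∑ p ∈ (Finset.range (n + 1)).filter Nat.Prime, 1 / (p : ℝ)) -
          Real.log (Real.log n)) atTop (nhds A) := by
  refine ⟨1 - Real.log (Real.log 2) + ∑' k, mv k, ?_⟩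
  have h2 : Tendsto (fun n : ℕ => ∑ k ∈ Finset.range n, mv k) atTop
      (nhds (∑' k, mv k)) := mv_summable.hasSum.tendsto_sum_nat
  have h3 : Tendsto (fun n : ℕ =>
      mT n / Real.log n - Real.log (Real.log 2) + ∑ k ∈ Finset.range n, mv k) atTop
      (nhds (1 - Real.log (Real.log 2) + ∑' k, mv k)) :=
    (mT_div_log_tendsto.sub tendsto_const_nhds).add h2
  apply h3.congr'
  filter_upwards [eventually_ge_atTop 2] with n hn
  have key : ∑ k ∈ Finset.Ico 2 n, mT k * (1 / Real.log k - 1 / Real.log (k+1))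
      = ∑ k ∈ Finset.range n, mv k + (Real.log (Real.log n) - Real.log (Real.log 2)) := by
    rw [sum_mv hn, ← sum_loglog hn, ← Finset.sum_add_distrib]
    apply Finset.sum_congr rfl
    intro k _
    rw [mu, md]
    push_cast
    ring
  have habel := abel_identity hn
  rw [← mS_eq, habel, key]
  ring
end

section
/- Let d(n) denote the number of divisors of n and C the Euler–Mascheroni constant. Then ∑_{k=1}^n d(k) = n log n + (2C − 1)n + O(√n). -/
open Filter Asymptotics Finset

lemma card_divAntidiag (n : ℕ) :
    (Nat.divisorsAntidiagonal n).card = n.divisors.card := by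
  rw [← Nat.image_fst_divisorsAntidiagonal]
  refine (Finset.card_image_of_injOn ?_).symm
  intro p hp q hq h
  simp only [Finset.coe_sort_coe, Finset.mem_coe, Nat.mem_divisorsAntidiagonal] at hp hq
  have h1 : p.1 ≠ 0 := fun h0 => hp.2 (by rw [← hp.1, h0, zero_mul])
  have heq : p.1 * p.2 = p.1 * q.2 := by rw [hp.1, h, hq.1]
  exact Prod.ext h (Nat.eq_of_mul_eq_mul_left (Nat.pos_of_ne_zero h1) heq)

noncomputable def T (n : ℕ) : Finset (ℕ × ℕ) :=
  (Icc 1 n ×ˢ Icc 1 n).filter (fun p => p.1 * p.2 ≤ n)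

lemma mem_T {n : ℕ} {p : ℕ × ℕ} :
    p ∈ T n ↔ 1 ≤ p.1 ∧ 1 ≤ p.2 ∧ p.1 * p.2 ≤ n := by
  simp only [T, mem_filter, mem_product, mem_Icc]
  constructor
  · rintro ⟨⟨⟨h1, _⟩, ⟨h2, _⟩⟩, h3⟩; exact ⟨h1, h2, h3⟩
  · rintro ⟨h1, h2, h3⟩
    refine ⟨⟨⟨h1, ?_⟩, ⟨h2, ?_⟩⟩, h3⟩
    · calc p.1 ≤ p.1 * p.2 := Nat.le_mul_of_pos_right _ h2
        _ ≤ n := h3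
    · calc p.2 ≤ p.1 * p.2 := Nat.le_mul_of_pos_left _ h1
        _ ≤ n := h3

lemma sum_divisors_eq_card_T (n : ℕ) :
    ∑ k ∈ Icc 1 n, k.divisors.card = (T n).card := by
  have hT : T n = (Icc 1 n).biUnion (fun k => Nat.divisorsAntidiagonal k) := by
    ext p
    simp only [mem_T, Finset.mem_biUnion, mem_Icc, Nat.mem_divisorsAntidiagonal]
    constructor
    · rintro ⟨h1, h2, h3⟩
      have hne : p.1 * p.2 ≠ 0 := by positivity
      exact ⟨p.1 * p.2, ⟨Nat.one_le_iff_ne_zero.2 hne, h3⟩, rfl, hne⟩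
    · rintro ⟨k, ⟨hk1, hk2⟩, hpk, hk0⟩
      subst hpk
      have h1 : p.1 ≠ 0 := fun h => hk0 (by rw [h, zero_mul])
      have h2 : p.2 ≠ 0 := fun h => hk0 (by rw [h, mul_zero])
      exact ⟨Nat.one_le_iff_ne_zero.2 h1, Nat.one_le_iff_ne_zero.2 h2, hk2⟩
  rw [hT, Finset.card_biUnion]
  · exact Finset.sum_congr rfl (fun k _ => (card_divAntidiag k).symm)
  · intro a _ b _ hab
    simp only [Finset.disjoint_left]
    intro p hp hq
    rw [Nat.mem_divisorsAntidiagonal] at hp hq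
    exact hab (hp.1 ▸ hq.1)

lemma card_T_filter_fst (n : ℕ) :
    ((T n).filter (fun p => p.1 ≤ n.sqrt)).card = ∑ d ∈ Icc 1 n.sqrt, n / d := by
  have h : (T n).filter (fun p => p.1 ≤ n.sqrt)
      = (Icc 1 n.sqrt).biUnion (fun d => {d} ×ˢ Icc 1 (n / d)) := by
    ext p
    simp only [mem_filter, mem_T, Finset.mem_biUnion, mem_Icc, mem_product, mem_singleton]
    constructor
    · rintro ⟨⟨h1, h2, h3⟩, h4⟩
      exact ⟨p.1, ⟨h1, h4⟩, rfl, h2, (Nat.le_div_iff_mul_le h1).2 (by rwa [mul_comm])⟩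
    · rintro ⟨d, ⟨hd1, hd2⟩, hpd, hp2, hp2'⟩
      refine ⟨⟨hpd ▸ hd1, hp2, ?_⟩, hpd ▸ hd2⟩
      have := (Nat.le_div_iff_mul_le (hpd ▸ hd1 : 1 ≤ p.1)).1 (hpd ▸ hp2')
      rwa [mul_comm] at this
  rw [h, Finset.card_biUnion]
  · refine Finset.sum_congr rfl (fun d _ => ?_)
    simp [Nat.card_Icc]
  · intro a _ b _ hab
    simp only [Finset.disjoint_left, mem_product, mem_singleton]
    rintro p ⟨rfl, -⟩ ⟨rfl, -⟩
    exact hab rfl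

lemma card_T_filter_snd (n : ℕ) :
    ((T n).filter (fun p => p.2 ≤ n.sqrt)).card = ∑ d ∈ Icc 1 n.sqrt, n / d := by
  rw [← card_T_filter_fst]
  have h : (T n).filter (fun p => p.2 ≤ n.sqrt)
      = ((T n).filter (fun p => p.1 ≤ n.sqrt)).image Prod.swap := by
    ext p
    simp only [Finset.mem_image, mem_filter, mem_T]
    constructor
    · rintro ⟨⟨h1, h2, h3⟩, h4⟩
      exact ⟨p.swap, ⟨⟨h2, h1, by rwa [mul_comm]⟩, h4⟩, Prod.swap_swap p⟩
    · rintro ⟨q, ⟨⟨h1, h2, h3⟩, h4⟩, rfl⟩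
      exact ⟨⟨h2, h1, by rwa [mul_comm]⟩, h4⟩
  rw [h, Finset.card_image_of_injective _ Prod.swap_injective]

lemma hyperbola (n : ℕ) :
    (T n).card + n.sqrt * n.sqrt = 2 * ∑ d ∈ Icc 1 n.sqrt, n / d := by
  classical
  set A := (T n).filter (fun p => p.1 ≤ n.sqrt)
  set B := (T n).filter (fun p => p.2 ≤ n.sqrt)
  have hunion : A ∪ B = T n := by
    apply Finset.Subset.antisymm
    · exact Finset.union_subset (filter_subset _ _) (filter_subset _ _)
    · intro p hp
      rw [Finset.mem_union, mem_filter, mem_filter]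
      by_contra hc
      push_neg at hc
      have h1 := hc.1 hp
      have h2 := hc.2 hp
      have := mem_T.1 hp
      have : n < p.1 * p.2 := by
        calc n < (n.sqrt + 1) * (n.sqrt + 1) := Nat.lt_succ_sqrt n
          _ ≤ p.1 * p.2 := Nat.mul_le_mul (by omega) (by omega)
      omega
  have hinter : A ∩ B = Icc 1 n.sqrt ×ˢ Icc 1 n.sqrt := by
    ext p
    simp only [A, B, Finset.mem_inter, mem_filter, mem_T, mem_product, mem_Icc]
    constructor
    · rintro ⟨⟨⟨h1, h2, h3⟩, h4⟩, ⟨-, h5⟩⟩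
      exact ⟨⟨h1, h4⟩, h2, h5⟩
    · rintro ⟨⟨h1, h2⟩, h3, h4⟩
      have hmul : p.1 * p.2 ≤ n := le_trans (Nat.mul_le_mul h2 h4) (Nat.sqrt_le n)
      exact ⟨⟨⟨h1, h3, hmul⟩, h2⟩, ⟨h1, h3, hmul⟩, h4⟩
  have := Finset.card_union_add_card_inter A B
  rw [hunion, hinter] at this
  rw [Finset.card_product, Nat.card_Icc] at this
  rw [card_T_filter_fst, card_T_filter_snd] at this
  simp only [Nat.add_sub_cancel] at this
  omega


lemma harmonic_cast_sum (s : ℕ) :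
    ((harmonic s : ℚ) : ℝ) = ∑ d ∈ Icc 1 s, ((d : ℝ))⁻¹ := by
  rw [harmonic_eq_sum_Icc]
  push_cast
  rfl

lemma gamma_bound {s : ℕ} (hs : 1 ≤ s) :
    0 ≤ ((harmonic s : ℚ) : ℝ) - Real.log s - Real.eulerMascheroniConstant ∧
    ((harmonic s : ℚ) : ℝ) - Real.log s - Real.eulerMascheroniConstant ≤ 1 / s := by
  have hs0 : (0 : ℝ) < s := by exact_mod_cast hs
  have h1 := Real.eulerMascheroniConstant_lt_eulerMascheroniSeq' s
  have h2 := Real.eulerMascheroniSeq_lt_eulerMascheroniConstant s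
  rw [Real.eulerMascheroniSeq', if_neg (by omega)] at h1
  rw [Real.eulerMascheroniSeq] at h2
  constructor
  · linarith
  · have hlog : Real.log (s + 1) - Real.log s ≤ 1 / s := by
      rw [← Real.log_div (by positivity) (by positivity)]
      have := Real.log_le_sub_one_of_pos (show (0:ℝ) < (s+1)/s by positivity)
      have heq : ((s:ℝ) + 1) / s - 1 = 1 / s := by field_simp; ring
      linarith
    have : (s : ℝ) + 1 = ((s : ℕ) + 1 : ℝ) := by push_cast; ring
    linarith

lemma floor_sum_bound (n s : ℕ) :
    0 ≤ (n : ℝ) * ((harmonic s : ℚ) : ℝ) - ∑ d ∈ Icc 1 s, ((n / d : ℕ) : ℝ) ∧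
    (n : ℝ) * ((harmonic s : ℚ) : ℝ) - ∑ d ∈ Icc 1 s, ((n / d : ℕ) : ℝ) ≤ s := by
  rw [harmonic_cast_sum, Finset.mul_sum, ← Finset.sum_sub_distrib]
  constructor
  · apply Finset.sum_nonneg
    intro d hd
    rw [mem_Icc] at hd
    have hd0 : (0:ℝ) < d := by exact_mod_cast hd.1
    have := Nat.cast_div_le (m := n) (n := d) (α := ℝ)
    rw [sub_nonneg]
    calc ((n / d : ℕ) : ℝ) ≤ (n : ℝ) / d := this
      _ = (n:ℝ) * ((d:ℝ))⁻¹ := by ring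
  · calc ∑ d ∈ Icc 1 s, ((n:ℝ) * ((d:ℝ))⁻¹ - ((n / d : ℕ) : ℝ))
        ≤ ∑ d ∈ Icc 1 s, (1:ℝ) := by
          apply Finset.sum_le_sum
          intro d hd
          rw [mem_Icc] at hd
          have hd0 : 0 < d := hd.1
          have hd0' : (0:ℝ) < d := by exact_mod_cast hd0
          have h := Nat.lt_mul_div_succ n hd0
          have h' : (n : ℝ) < d * ((n / d : ℕ) + 1) := by exact_mod_cast h
          have : (n : ℝ) / d < ((n / d : ℕ) : ℝ) + 1 := by
            rw [div_lt_iff₀ hd0']; linarith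
          have : (n:ℝ) * ((d:ℝ))⁻¹ = (n:ℝ)/d := by ring
          linarith
      _ = s := by simp

lemma log_sqrt_bound {n : ℕ} (hn : 1 ≤ n) :
    |2 * Real.log n.sqrt - Real.log n| ≤ 2 / n.sqrt := by
  set s := n.sqrt with hs
  have hs1 : 1 ≤ s := Nat.one_le_iff_ne_zero.2 (by
    intro h
    have := Nat.sqrt_eq_zero.1 h
    omega)
  have hs0 : (0:ℝ) < s := by exact_mod_cast hs1
  have hn0 : (0:ℝ) < n := by exact_mod_cast hn
  have hup : Real.sqrt n < s + 1 := by
    have h := Nat.lt_succ_sqrt n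
    have h' : (n : ℝ) < ((s:ℝ) + 1) * ((s:ℝ) + 1) := by exact_mod_cast h
    nlinarith [Real.sq_sqrt hn0.le, Real.sqrt_nonneg (n:ℝ)]
  have hlow : (s : ℝ) ≤ Real.sqrt n := by
    have h := Nat.sqrt_le n
    have h' : ((s:ℝ)) * s ≤ n := by exact_mod_cast h
    nlinarith [Real.sq_sqrt hn0.le, Real.sqrt_nonneg (n:ℝ)]
  have hlogn : Real.log n = 2 * Real.log (Real.sqrt n) := by
    rw [Real.log_sqrt hn0.le]; ring
  have hd : 0 ≤ Real.log (Real.sqrt n) - Real.log s := by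
    have := Real.log_le_log hs0 hlow
    linarith
  have hd2 : Real.log (Real.sqrt n) - Real.log s ≤ 1 / s := by
    have h1 : Real.log (Real.sqrt n) ≤ Real.log ((s:ℝ) + 1) :=
      Real.log_le_log (Real.sqrt_pos.2 hn0) hup.le
    have h2 : Real.log ((s:ℝ) + 1) - Real.log s ≤ 1 / s := by
      rw [← Real.log_div (by positivity) (by positivity)]
      have := Real.log_le_sub_one_of_pos (show (0:ℝ) < ((s:ℝ)+1)/s by positivity)
      have heq : ((s:ℝ) + 1) / s - 1 = 1 / s := by field_simp; ring
      linarith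
    linarith
  have h2s : (2:ℝ)/s = 2*(1/s) := by ring
  rw [hlogn, abs_le]
  constructor <;> linarith

lemma key_bound {n : ℕ} (hn : 4 ≤ n) :
    |(∑ k ∈ Icc 1 n, (k.divisors.card : ℝ)) -
      ((n : ℝ) * Real.log n + (2 * Real.eulerMascheroniConstant - 1) * n)| ≤
    12 * Real.sqrt n := by
  set s := n.sqrt with hs
  have hs2 : 2 ≤ s := by
    rw [hs]
    have : 2 * 2 ≤ n := by omega
    exact (Nat.le_sqrt.2 this)
  have hs1 : 1 ≤ s := by omega
  have hs0 : (0:ℝ) < s := by exact_mod_cast hs1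
  have hn0 : (0:ℝ) < n := by positivity
  -- hyperbola identity over ℝ
  have hyp := hyperbola n
  have hdsum := sum_divisors_eq_card_T n
  have hident : (∑ k ∈ Icc 1 n, (k.divisors.card : ℝ))
      = 2 * ∑ d ∈ Icc 1 s, ((n / d : ℕ) : ℝ) - (s : ℝ) * s := by
    have : ((∑ k ∈ Icc 1 n, k.divisors.card : ℕ) : ℝ) + (s:ℝ) * s
        = 2 * ∑ d ∈ Icc 1 s, ((n / d : ℕ) : ℝ) := by
      rw [hdsum]
      exact_mod_cast congrArg (Nat.cast : ℕ → ℝ) hyp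
    push_cast at this ⊢
    linarith
  set H := ((harmonic s : ℚ) : ℝ) with hH
  set γ := Real.eulerMascheroniConstant with hγ
  set Sd := ∑ d ∈ Icc 1 s, ((n / d : ℕ) : ℝ) with hSd
  obtain ⟨hf1, hf2⟩ := floor_sum_bound n s
  obtain ⟨hg1, hg2⟩ := gamma_bound hs1
  have hlog := log_sqrt_bound (by omega : 1 ≤ n)
  -- sqrt comparisons
  have hup : Real.sqrt n < s + 1 := by
    have h := Nat.lt_succ_sqrt n
    have h' : (n : ℝ) < ((s:ℝ) + 1) * ((s:ℝ) + 1) := by exact_mod_cast h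
    nlinarith [Real.sq_sqrt hn0.le, Real.sqrt_nonneg (n:ℝ)]
  have hlow : (s : ℝ) ≤ Real.sqrt n := by
    have h := Nat.sqrt_le n
    have h' : ((s:ℝ)) * s ≤ n := by exact_mod_cast h
    nlinarith [Real.sq_sqrt hn0.le, Real.sqrt_nonneg (n:ℝ)]
  have hrs2 : (2:ℝ) ≤ Real.sqrt n := by
    have : (2:ℝ) ≤ (s:ℝ) := by exact_mod_cast hs2
    linarith
  have hshalf : Real.sqrt n / 2 ≤ (s : ℝ) := by linarith
  have hns : (n : ℝ) / s ≤ 2 * Real.sqrt n := by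
    rw [div_le_iff₀ hs0]
    nlinarith [Real.sq_sqrt hn0.le]
  have hnsq : (n:ℝ) - (s:ℝ)*s ≤ 2 * (s:ℝ) := by
    have h : n < (s + 1) * (s + 1) := Nat.lt_succ_sqrt n
    have hnat : n ≤ s * s + 2 * s := by nlinarith
    have h' : (n : ℝ) ≤ (s:ℝ) * s + 2 * s := by exact_mod_cast hnat
    linarith
  have hnsq0 : 0 ≤ (n:ℝ) - (s:ℝ)*s := by
    have h := Nat.sqrt_le n
    have h' : ((s:ℝ)) * s ≤ n := by exact_mod_cast h
    linarith
  -- decomposition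
  have hdecomp : (∑ k ∈ Icc 1 n, (k.divisors.card : ℝ)) -
      ((n : ℝ) * Real.log n + (2 * γ - 1) * n)
      = 2 * (Sd - (n:ℝ) * H) + (n:ℝ) * (2 * Real.log s - Real.log n)
        + 2 * (n:ℝ) * (H - Real.log s - γ) + ((n:ℝ) - (s:ℝ)*s) := by
    rw [hident]
    ring
  rw [hdecomp]
  have e1 : |2 * (Sd - (n:ℝ) * H)| ≤ 2 * s := by
    rw [abs_mul, abs_two]
    have : |Sd - (n:ℝ)*H| ≤ s := by rw [abs_le]; constructor <;> linarith
    linarith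
  have e2 : |(n:ℝ) * (2 * Real.log s - Real.log n)| ≤ 2 * ((n:ℝ)/s) := by
    rw [abs_mul, abs_of_nonneg hn0.le]
    calc (n:ℝ) * |2 * Real.log s - Real.log n| ≤ (n:ℝ) * (2 / s) :=
          mul_le_mul_of_nonneg_left hlog hn0.le
      _ = 2 * ((n:ℝ)/s) := by ring
  have e3 : |2 * (n:ℝ) * (H - Real.log s - γ)| ≤ 2 * ((n:ℝ)/s) := by
    rw [abs_mul, abs_of_nonneg (by positivity : (0:ℝ) ≤ 2*(n:ℝ))]
    have : |H - Real.log s - γ| ≤ 1 / s := by rw [abs_le]; constructor <;> linarith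
    calc 2 * (n:ℝ) * |H - Real.log s - γ| ≤ 2 * (n:ℝ) * (1/s) :=
          mul_le_mul_of_nonneg_left this (by positivity)
      _ = 2 * ((n:ℝ)/s) := by ring
  have e4 : |(n:ℝ) - (s:ℝ)*s| ≤ 2 * s := by
    rw [abs_of_nonneg hnsq0]; exact hnsq
  calc |2 * (Sd - (n:ℝ) * H) + (n:ℝ) * (2 * Real.log s - Real.log n)
        + 2 * (n:ℝ) * (H - Real.log s - γ) + ((n:ℝ) - (s:ℝ)*s)|
      ≤ |2 * (Sd - (n:ℝ) * H)| + |(n:ℝ) * (2 * Real.log s - Real.log n)|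
        + |2 * (n:ℝ) * (H - Real.log s - γ)| + |(n:ℝ) - (s:ℝ)*s| := by
        apply (abs_add_le _ _).trans
        gcongr
        apply (abs_add_le _ _).trans
        gcongr
        exact abs_add_le _ _
    _ ≤ 2 * s + 2 * ((n:ℝ)/s) + 2 * ((n:ℝ)/s) + 2 * s := by linarith
    _ ≤ 12 * Real.sqrt n := by linarith

theorem dirichlet_divisor_theorem :
    (fun n : ℕ => (∑ k ∈ Finset.Icc 1 n, (k.divisors.card : ℝ)) -
        ((n : ℝ) * Real.log n + (2 * Real.eulerMascheroniConstant - 1) * n))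
      =O[atTop] fun n : ℕ => Real.sqrt n := by
  rw [isBigO_iff]
  refine ⟨12, ?_⟩
  filter_upwards [eventually_ge_atTop 4] with n hn
  rw [Real.norm_eq_abs, Real.norm_eq_abs, abs_of_nonneg (Real.sqrt_nonneg _)]
  exact key_bound hn
end
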